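/- Let p ∈ [1,∞), ε > 0, k ≥ 0, and let s, t ∈ L_p[0, k+2] be supported on [0, k+1]. For each i ∈ ℕ define m_i = (s+t)/2 + Σ_{r=1}^{2^i} (−1)^r ε‖s−t‖_p χ_{[k+1+(r−1)2^{−i}, k+1+r·2^{−i}]}. Then for every i, ‖s − m_i‖_p = (1/2)(1 + (2ε)^p)^{1/p} ‖s − t‖_p. -/

import Mathlib

open MeasureTheory

/-- in `L_p[0,k+2]`, the distance from `s` to each branch point
`m_i` of the thin countably branching diamond equals
`(1/2)(1+(2ε)^p)^{1/p} ‖s−t‖_p`.  The `L_p` norm is written as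
`(∫ |·|^p)^{1/p}` over `[0, k+2]`. -/
theorem thin_diamond_Lp_branch_distance (p ε : ℝ) (hp : 1 ≤ p) (hε : 0 < ε)
    (k : ℕ) (s t : ℝ → ℝ)
    (hs : ∀ x : ℝ, (k : ℝ) + 1 < x → s x = 0)
    (ht : ∀ x : ℝ, (k : ℝ) + 1 < x → t x = 0)
    (hint : IntegrableOn (fun x => |s x - t x| ^ p) (Set.Icc 0 ((k : ℝ) + 2)))
    (N : ℝ)
    (hN : N = (∫ x in Set.Icc (0 : ℝ) ((k : ℝ) + 2), |s x - t x| ^ p) ^ (1/p))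
    (i : ℕ) (m : ℝ → ℝ)
    (hm : m = fun x => (s x + t x) / 2 + ∑ r ∈ Finset.Icc (1 : ℕ) (2 ^ i),
      (-1 : ℝ) ^ r * ε * N *
        Set.indicator
          (Set.Icc ((k : ℝ) + 1 + ((r : ℝ) - 1) / 2 ^ i) ((k : ℝ) + 1 + (r : ℝ) / 2 ^ i))
          (fun _ => (1 : ℝ)) x) :
    (∫ x in Set.Icc (0 : ℝ) ((k : ℝ) + 2), |s x - m x| ^ p) ^ (1/p) =
      (1/2) * (1 + (2 * ε) ^ p) ^ (1/p) * N := by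
  subst hm
  have hp0 : (0:ℝ) < p := lt_of_lt_of_le one_pos hp
  have hpne : p ≠ 0 := hp0.ne'
  set c : ℝ := (k : ℝ) + 1 with hc
  have h2i : (0:ℝ) < 2 ^ i := by positivity
  set I : ℝ := ∫ x in Set.Icc (0:ℝ) ((k:ℝ)+2), |s x - t x| ^ p with hI
  have hI0 : 0 ≤ I := integral_nonneg fun x => by positivity
  have hN0 : 0 ≤ N := by rw [hN]; positivity
  have hNp : N ^ p = I := by
    rw [hN, ← Real.rpow_mul hI0, one_div, inv_mul_cancel₀ hpne, Real.rpow_one]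
  -- the two halves of the interval
  have hc2 : c ≤ (k:ℝ) + 2 := by rw [hc]; linarith
  have h0c : (0:ℝ) ≤ c := by positivity
  have hsplit : Set.Icc (0:ℝ) ((k:ℝ)+2) = Set.Icc 0 c ∪ Set.Ioc c ((k:ℝ)+2) :=
    (Set.Icc_union_Ioc_eq_Icc h0c hc2).symm
  have hdisj : Disjoint (Set.Icc (0:ℝ) c) (Set.Ioc c ((k:ℝ)+2)) :=
    (Set.Iic_disjoint_Ioc le_rfl).mono Set.Icc_subset_Iic_self le_rfl
  set F : ℝ → ℝ := fun x => |s x - ((s x + t x) / 2 + ∑ r ∈ Finset.Icc (1 : ℕ) (2 ^ i),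
      (-1 : ℝ) ^ r * ε * N *
        Set.indicator
          (Set.Icc ((k : ℝ) + 1 + ((r : ℝ) - 1) / 2 ^ i) ((k : ℝ) + 1 + (r : ℝ) / 2 ^ i))
          (fun _ => (1 : ℝ)) x)| ^ p with hF
  -- pointwise description on the left half
  have hptA : ∀ x : ℝ, x < c → F x = (1/2 : ℝ) ^ p * |s x - t x| ^ p := by
    intro x hx
    have hsum : (∑ r ∈ Finset.Icc (1 : ℕ) (2 ^ i),
        (-1 : ℝ) ^ r * ε * N *
          Set.indicator
            (Set.Icc ((k : ℝ) + 1 + ((r : ℝ) - 1) / 2 ^ i) ((k : ℝ) + 1 + (r : ℝ) / 2 ^ i))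
            (fun _ => (1 : ℝ)) x) = 0 := by
      apply Finset.sum_eq_zero
      intro r hr
      have hr1 : 1 ≤ r := (Finset.mem_Icc.1 hr).1
      have hnot : x ∉ Set.Icc ((k : ℝ) + 1 + ((r : ℝ) - 1) / 2 ^ i)
          ((k : ℝ) + 1 + (r : ℝ) / 2 ^ i) := by
        intro hxm
        have h1 : (0:ℝ) ≤ ((r:ℝ) - 1) / 2 ^ i := by
          apply div_nonneg _ h2i.le
          have : (1:ℝ) ≤ (r:ℝ) := by exact_mod_cast hr1
          linarith
        have := hxm.1
        rw [hc] at hx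
        linarith
      rw [Set.indicator_of_notMem hnot, mul_zero]
    rw [hF]
    simp only [hsum, add_zero]
    have : |s x - (s x + t x) / 2| = (1/2) * |s x - t x| := by
      rw [show s x - (s x + t x) / 2 = (s x - t x) / 2 by ring]
      rw [abs_div]
      norm_num
      ring
    rw [this, Real.mul_rpow (by norm_num) (abs_nonneg _)]
  -- pointwise description on the right half, off a countable set
  set E : Set ℝ := Set.range (fun n : ℤ => c + (n:ℝ) / 2 ^ i) with hE
  have hEnull : MeasureTheory.volume E = 0 :=
    Set.Countable.measure_zero (Set.countable_range _) _
  have hptB : ∀ x : ℝ, c < x → x ≤ (k:ℝ) + 2 → x ∉ E → F x = ε ^ p * I := by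
    intro x hx1 hx2 hxE
    have hsx : s x = 0 := hs x (by rw [hc] at hx1; exact hx1)
    have htx : t x = 0 := ht x (by rw [hc] at hx1; exact hx1)
    set y : ℝ := (x - c) * 2 ^ i with hy
    have hy0 : 0 < y := mul_pos (by linarith) h2i
    have hy1 : y ≤ 2 ^ i := by
      have : x - c ≤ 1 := by rw [hc]; linarith
      calc y = (x - c) * 2 ^ i := rfl
        _ ≤ 1 * 2 ^ i := by nlinarith
        _ = 2 ^ i := one_mul _
    have hynotint : ∀ n : ℤ, y ≠ (n : ℝ) := by
      intro n hn
      apply hxE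
      refine ⟨n, ?_⟩
      have : x = c + y / 2 ^ i := by field_simp [hy]; rw [hy]; ring
      rw [this, hn]
    have hylt : y < (⌈y⌉ : ℝ) :=
      lt_of_le_of_ne (Int.le_ceil y) (fun h => hynotint ⌈y⌉ h)
    have hr1 : 1 ≤ ⌈y⌉ := by
      have : 0 < ⌈y⌉ := Int.ceil_pos.2 hy0
      omega
    have hr2 : ⌈y⌉ ≤ ((2 ^ i : ℕ) : ℤ) := by
      apply Int.ceil_le.2
      push_cast
      exact hy1
    set rn : ℕ := ⌈y⌉.toNat with hrn
    have hrnc : (rn : ℝ) = (⌈y⌉ : ℝ) := by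
      rw [hrn]
      exact_mod_cast Int.toNat_of_nonneg (by omega : (0:ℤ) ≤ ⌈y⌉)
    have hrnmem : rn ∈ Finset.Icc 1 (2 ^ i) := by
      rw [Finset.mem_Icc]
      omega
    have hsum : (∑ r ∈ Finset.Icc (1 : ℕ) (2 ^ i),
        (-1 : ℝ) ^ r * ε * N *
          Set.indicator
            (Set.Icc ((k : ℝ) + 1 + ((r : ℝ) - 1) / 2 ^ i) ((k : ℝ) + 1 + (r : ℝ) / 2 ^ i))
            (fun _ => (1 : ℝ)) x) = (-1 : ℝ) ^ rn * ε * N := by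
      rw [Finset.sum_eq_single_of_mem rn hrnmem]
      · have hxin : x ∈ Set.Icc ((k : ℝ) + 1 + ((rn : ℝ) - 1) / 2 ^ i)
            ((k : ℝ) + 1 + (rn : ℝ) / 2 ^ i) := by
          have hceil : (⌈y⌉ : ℝ) < y + 1 := Int.ceil_lt_add_one y
          constructor
          · rw [hrnc, show (k:ℝ) + 1 = c from rfl]
            have h1 : ((⌈y⌉ : ℝ) - 1) / 2 ^ i ≤ x - c := by
              rw [div_le_iff₀ h2i]
              nlinarith [hceil]
            linarith
          · rw [hrnc, show (k:ℝ) + 1 = c from rfl]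
            have h1 : x - c ≤ (⌈y⌉ : ℝ) / 2 ^ i := by
              rw [le_div_iff₀ h2i]
              nlinarith [Int.le_ceil y]
            linarith
        rw [Set.indicator_of_mem hxin, mul_one]
      · intro b hb hbne
        rw [Finset.mem_Icc] at hb
        have hnot : x ∉ Set.Icc ((k : ℝ) + 1 + ((b : ℝ) - 1) / 2 ^ i)
            ((k : ℝ) + 1 + (b : ℝ) / 2 ^ i) := by
          intro hxm
          obtain ⟨hl, hr⟩ := hxm
          rw [show (k:ℝ) + 1 = c from rfl] at hl hr
          have hby1 : (b : ℝ) - 1 ≤ y := by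
            rw [hy]
            exact (div_le_iff₀ h2i).1 (by linarith : ((b:ℝ) - 1) / 2 ^ i ≤ x - c)
          have hby2 : y ≤ (b : ℝ) := by
            rw [hy]
            exact (le_div_iff₀ h2i).1 (by linarith : x - c ≤ (b:ℝ) / 2 ^ i)
          have h1 : ⌈y⌉ ≤ (b : ℤ) := Int.ceil_le.2 (by exact_mod_cast hby2)
          have h2 : (b : ℝ) < (⌈y⌉ : ℝ) + 1 := by linarith [hylt]
          have h3 : (b : ℤ) < ⌈y⌉ + 1 := by exact_mod_cast h2
          have : (b : ℤ) = ⌈y⌉ := by omega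
          apply hbne
          omega
        rw [Set.indicator_of_notMem hnot, mul_zero]
    rw [hF]
    simp only [hsx, htx, hsum]
    have : |(0:ℝ) - ((0 + 0) / 2 + (-1 : ℝ) ^ rn * ε * N)| = ε * N := by
      rw [show (0:ℝ) - ((0 + 0) / 2 + (-1 : ℝ) ^ rn * ε * N) = -((-1:ℝ)^rn * (ε * N)) by ring]
      rw [abs_neg, abs_mul, abs_pow, abs_neg, abs_one, one_pow, one_mul,
        abs_of_nonneg (by positivity)]
    rw [this, Real.mul_rpow hε.le hN0, hNp]
  -- a.e. equalities on the restricted measures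
  have haeA : F =ᵐ[MeasureTheory.volume.restrict (Set.Icc (0:ℝ) c)]
      (fun x => (1/2 : ℝ) ^ p * |s x - t x| ^ p) := by
    have hcnull : MeasureTheory.volume ({c} : Set ℝ) = 0 := Real.volume_singleton
    filter_upwards [ae_restrict_mem measurableSet_Icc,
      ae_restrict_of_ae (measure_eq_zero_iff_ae_notMem.mp hcnull)] with x hxA hxc
    exact hptA x (lt_of_le_of_ne hxA.2 hxc)
  have haeB : F =ᵐ[MeasureTheory.volume.restrict (Set.Ioc c ((k:ℝ)+2))]
      (fun _ => ε ^ p * I) := by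
    filter_upwards [ae_restrict_mem measurableSet_Ioc,
      ae_restrict_of_ae (measure_eq_zero_iff_ae_notMem.mp hEnull)] with x hxB hxE
    exact hptB x hxB.1 hxB.2 hxE
  -- integrability
  have hintA : IntegrableOn F (Set.Icc (0:ℝ) c) := by
    apply MeasureTheory.Integrable.congr _ haeA.symm
    exact ((hint.mono_set (by rw [hsplit]; exact Set.subset_union_left)).const_mul _)
  have hintB : IntegrableOn F (Set.Ioc c ((k:ℝ)+2)) := by
    apply MeasureTheory.Integrable.congr _ haeB.symm
    exact integrableOn_const (by rw [Real.volume_Ioc]; exact ENNReal.ofReal_ne_top)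
  -- integral of |s-t|^p over right half is 0
  have hIB : (∫ x in Set.Ioc c ((k:ℝ)+2), |s x - t x| ^ p) = 0 := by
    have heq : (∫ x in Set.Ioc c ((k:ℝ)+2), |s x - t x| ^ p)
        = ∫ _x in Set.Ioc c ((k:ℝ)+2), (0:ℝ) :=
      MeasureTheory.setIntegral_congr_fun measurableSet_Ioc (fun x hx => by
        rw [hs x hx.1, ht x hx.1]; simp [Real.zero_rpow hpne])
    rw [heq, MeasureTheory.integral_zero]
  have hIA : (∫ x in Set.Icc (0:ℝ) c, |s x - t x| ^ p) = I := by
    have : I = (∫ x in Set.Icc (0:ℝ) c, |s x - t x| ^ p)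
        + ∫ x in Set.Ioc c ((k:ℝ)+2), |s x - t x| ^ p := by
      rw [hI, hsplit]
      exact MeasureTheory.setIntegral_union hdisj measurableSet_Ioc
        (hint.mono_set (by rw [hsplit]; exact Set.subset_union_left))
        (hint.mono_set (by rw [hsplit]; exact Set.subset_union_right))
    rw [this, hIB, add_zero]
  -- compute the main integral
  have hmain : (∫ x in Set.Icc (0:ℝ) ((k:ℝ)+2), F x)
      = (1/2 : ℝ) ^ p * I + ε ^ p * I := by
    rw [hsplit, MeasureTheory.setIntegral_union hdisj measurableSet_Ioc hintA hintB]
    rw [MeasureTheory.integral_congr_ae haeA, MeasureTheory.integral_congr_ae haeB]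
    rw [MeasureTheory.integral_const_mul, hIA, MeasureTheory.setIntegral_const]
    rw [Real.volume_real_Ioc]
    rw [show (k:ℝ) + 2 - c = 1 by rw [hc]; ring]
    norm_num
  -- final algebra
  have key : (1/2 : ℝ) ^ p * I + ε ^ p * I = ((1/2) * (1 + (2*ε) ^ p) ^ (1/p) * N) ^ p := by
    rw [Real.mul_rpow (by positivity) hN0, Real.mul_rpow (by norm_num) (by positivity),
      ← Real.rpow_mul (by positivity), show (1/p)*p = 1 by field_simp, Real.rpow_one, hNp]
    rw [mul_add, mul_one, ← Real.mul_rpow (by norm_num) (by positivity)]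
    rw [show (1/2 : ℝ) * (2 * ε) = ε by ring]
    ring
  show (∫ x in Set.Icc (0:ℝ) ((k:ℝ)+2), F x) ^ (1/p) = _
  rw [hmain, key, ← Real.rpow_mul (by positivity), mul_one_div, div_self hpne, Real.rpow_one]
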